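/- If γ : [a,b] → ℍ \ {0} is a path with a companion 𝔍 : [a,b] → 𝕊/{±1} and ℐ, -ℐ : [a,b] → 𝕊 are the two continuous lifts of 𝔍, then there exist continuous functions x, y : [a,b] → ℝ such that γ(t) = x(t) + ℐ(t)·y(t) for all t. -/

import Mathlib

open Quaternion Set

/-- The quaternionic exponential, given by the power series `∑ qᵏ/k!`. -/
noncomputable def qexp (q : ℍ[ℝ]) : ℍ[ℝ] := NormedSpace.exp q

/-- The slice argument `arg_ℐ(q) ∈ (0,π)` of a nonreal quaternion. -/
noncomputable def sliceArg (q : ℍ[ℝ]) : ℝ := Real.arccos (q.re / ‖q‖)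

/-- The imaginary unit `ℐ(q)` of a nonreal quaternion. -/
noncomputable def unitIm (q : ℍ[ℝ]) : ℍ[ℝ] := ‖q.im‖⁻¹ • q.im

/- `Arg(q) = ℐ(q)·arg_ℐ(q)` for nonreal `q`, and `0` on the reals. -/
open scoped Classical in
noncomputable def qArg (q : ℍ[ℝ]) : ℍ[ℝ] :=
  if q.im = 0 then 0 else sliceArg q • unitIm q

/-- The `2k`-th branch of the quaternionic argument:
`Arg_{2k}(q) = ℐ(q)·(arg_ℐ(q) + 2kπ)`. -/
noncomputable def qArg2k (k : ℤ) (q : ℍ[ℝ]) : ℍ[ℝ] :=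
  (sliceArg q + 2 * (k : ℝ) * Real.pi) • unitIm q

/-- The sphere `𝕊` of imaginary units of the quaternions. -/
abbrev SphQ : Type := {I : ℍ[ℝ] // I * I = -1}

/-- The identification of antipodal imaginary units. -/
instance sphSetoid : Setoid SphQ where
  r I J := (I : ℍ[ℝ]) = (J : ℍ[ℝ]) ∨ (I : ℍ[ℝ]) = -(J : ℍ[ℝ])
  iseqv := by
    refine ⟨fun I => Or.inl rfl, ?_, ?_⟩
    · rintro I J (h | h)
      · exact Or.inl h.symm
      · exact Or.inr (by rw [h, neg_neg])
    · rintro I J K (h | h) (h' | h')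
      · exact Or.inl (h.trans h')
      · exact Or.inr (by rw [h, h'])
      · exact Or.inr (by rw [h, h'])
      · exact Or.inl (by rw [h, h', neg_neg])

/-- The quotient `𝕊/{±1}` of the sphere of imaginary units by the antipodal map. -/
abbrev PS : Type := Quotient sphSetoid

/-- `q` belongs to the complex slice `ℂ_c = ℝ + ℝJ` determined by `c ∈ 𝕊/{±1}`. -/
def inSlice (q : ℍ[ℝ]) (c : PS) : Prop :=
  ∃ J : SphQ, Quotient.mk sphSetoid J = c ∧ ∃ x y : ℝ, q = (x : ℍ[ℝ]) + y • (J : ℍ[ℝ])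

/-- `𝔍` is a companion of the path `γ` on `[a,b]`. -/
def IsCompanion (γ : ℝ → ℍ[ℝ]) (a b : ℝ) (𝔍 : ℝ → PS) : Prop :=
  ContinuousOn 𝔍 (Set.Icc a b) ∧ ∀ t ∈ Set.Icc a b, inSlice (γ t) (𝔍 t)

lemma re_eq_zero_of_sq (I : ℍ[ℝ]) (h : I * I = -1) : I.re = 0 := by
  have h1 := congrArg QuaternionAlgebra.re h
  have h2 := congrArg QuaternionAlgebra.imI h
  have h3 := congrArg QuaternionAlgebra.imJ h
  have h4 := congrArg QuaternionAlgebra.imK h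
  simp [Quaternion.re_mul, Quaternion.imI_mul, Quaternion.imJ_mul,
    Quaternion.imK_mul] at h1 h2 h3 h4
  nlinarith [sq_nonneg I.re, sq_nonneg I.imI, sq_nonneg I.imJ, sq_nonneg I.imK]

theorem canonical_form_of_path_with_companion (a b : ℝ) (hab : a ≤ b)
    (γ : ℝ → ℍ[ℝ]) (hγ : ContinuousOn γ (Icc a b)) (hne : ∀ t ∈ Icc a b, γ t ≠ 0)
    (𝔍 : ℝ → PS) (h𝔍 : IsCompanion γ a b 𝔍)
    (ℐ : ℝ → SphQ) (hℐ : ContinuousOn ℐ (Icc a b))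
    (hlift : ∀ t ∈ Icc a b, Quotient.mk sphSetoid (ℐ t) = 𝔍 t) :
    ∃ x y : ℝ → ℝ, ContinuousOn x (Icc a b) ∧ ContinuousOn y (Icc a b) ∧
      ∀ t ∈ Icc a b, γ t = (x t : ℍ[ℝ]) + y t • ((ℐ t : ℍ[ℝ])) := by
  refine ⟨fun t => (γ t).re, fun t => -((γ t * (ℐ t : ℍ[ℝ])).re), ?_, ?_, ?_⟩
  · exact Quaternion.continuous_re.comp_continuousOn hγ
  · exact ((Quaternion.continuous_re.comp_continuousOn
      (hγ.mul (continuous_subtype_val.comp_continuousOn hℐ))).neg)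
  · intro t ht
    obtain ⟨J, hJ, x', y', heq⟩ := h𝔍.2 t ht
    have hIJ : (ℐ t : ℍ[ℝ]) = (J : ℍ[ℝ]) ∨ (ℐ t : ℍ[ℝ]) = -(J : ℍ[ℝ]) :=
      Quotient.exact ((hlift t ht).trans hJ.symm)
    have hre : ((ℐ t : ℍ[ℝ])).re = 0 := re_eq_zero_of_sq _ (ℐ t).2
    have hsq : (ℐ t : ℍ[ℝ]) * (ℐ t : ℍ[ℝ]) = -1 := (ℐ t).2
    have key : ∀ y'' : ℝ, γ t = (x' : ℍ[ℝ]) + y'' • (ℐ t : ℍ[ℝ]) →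
        γ t = ((γ t).re : ℍ[ℝ]) + (-((γ t * (ℐ t : ℍ[ℝ])).re)) • (ℐ t : ℍ[ℝ]) := by
      intro y'' hq
      have hqre : (γ t).re = x' := by
        rw [hq]; simp [Quaternion.re_smul, hre]
      have hmre : (γ t * (ℐ t : ℍ[ℝ])).re = -y'' := by
        rw [hq, add_mul, smul_mul_assoc, hsq]
        simp [Quaternion.re_smul, hre]
      rw [hqre, hmre, neg_neg]; exact hq
    rcases hIJ with h | h
    · exact key y' (by rw [heq, h])
    · refine key (-y') ?_
      rw [heq, h]
      simp [smul_neg, neg_smul]
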